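/- Let X be a 2-dimensional simplicial complex and let p : X̃ → X be its universal cover. If X̃ has strong π₁-injectivity, then X has strong π₁-injectivity. -/

import Mathlib

open scoped Classical
open Geometry

/-- Injectivity (trivial kernel, at every base point) of the inclusion-induced map
`π₁(A) → π₁(B)` for `A ⊆ B`. -/
def PiOneInjIncl {X : Type*} [TopologicalSpace X] {A B : Set X} (hAB : A ⊆ B) : Prop :=
  ∀ (a : A) (γ : Path a a),
    (γ.map (continuous_inclusion hAB)).Homotopic (Path.refl (Set.inclusion hAB a)) →
    γ.Homotopic (Path.refl a)

/-- `Y` is a subcomplex of `X`. -/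
def IsSubcomplexOf {G : Type*} [NormedAddCommGroup G] [NormedSpace ℝ G]
    (Y X : SimplicialComplex ℝ G) : Prop := Y.faces ⊆ X.faces

lemma space_subset_of_subcomplex {G : Type*} [NormedAddCommGroup G] [NormedSpace ℝ G]
    {Y X : SimplicialComplex ℝ G} (h : IsSubcomplexOf Y X) :
    Y.space ⊆ X.space :=
  Set.biUnion_subset_biUnion_left h

/-- `X` is (at most) 2-dimensional: every face has at most 3 vertices. -/
def IsTwoDimensional {G : Type*} [NormedAddCommGroup G] [NormedSpace ℝ G]
    (X : SimplicialComplex ℝ G) : Prop := ∀ s ∈ X.faces, s.card ≤ 3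

/-- `Y` is strongly π₁-injective in `X`: for every subcomplex `Z` of `X`, the
inclusion-induced map `π₁(Y ∩ Z) → π₁(Z)` is injective. -/
def StronglyPiOneInjectiveIn {G : Type*} [NormedAddCommGroup G] [NormedSpace ℝ G]
    (Y X : SimplicialComplex ℝ G) : Prop :=
  ∀ Z : SimplicialComplex ℝ G, IsSubcomplexOf Z X →
    PiOneInjIncl (Set.inter_subset_right : Y.space ∩ Z.space ⊆ Z.space)

/-- `X` has strong π₁-injectivity: every π₁-injective subcomplex is strongly π₁-injective. -/
def HasStrongPiOneInjectivity {G : Type*} [NormedAddCommGroup G] [NormedSpace ℝ G]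
    (X : SimplicialComplex ℝ G) : Prop :=
  ∀ (Y : SimplicialComplex ℝ G) (h : IsSubcomplexOf Y X),
    PiOneInjIncl (space_subset_of_subcomplex h) → StronglyPiOneInjectiveIn Y X

variable {E : Type*} [NormedAddCommGroup E] [NormedSpace ℝ E]
variable {F : Type*} [NormedAddCommGroup F] [NormedSpace ℝ F]

set_option maxHeartbeats 1000000

section CoveringLifting

open unitInterval


section Lifting

variable {EE XX : Type*} [TopologicalSpace EE] [TopologicalSpace XX] {p : EE → XX}

/-- Pasting lemma: a piecewise function continuous on each of two closed sets, agreeing on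
the intersection, is continuous on the union. -/
lemma pasting_lemma {α β : Type*} [TopologicalSpace α] [TopologicalSpace β]
    {C Q : Set α} (hC : IsClosed C) (hQ : IsClosed Q) {f g : α → β}
    (hf : ContinuousOn f C) (hg : ContinuousOn g Q) (heq : Set.EqOn f g (C ∩ Q)) :
    ContinuousOn (C.piecewise f g) (C ∪ Q) := by
  have hfC : Set.EqOn (C.piecewise f g) f C := fun y hy => Set.piecewise_eq_of_mem _ _ _ hy
  have hgQ : Set.EqOn (C.piecewise f g) g Q := by
    intro y hy
    by_cases h : y ∈ C
    · rw [Set.piecewise_eq_of_mem _ _ _ h]; exact heq ⟨h, hy⟩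
    · exact Set.piecewise_eq_of_notMem _ _ _ h
  intro x hx
  apply ContinuousWithinAt.union
  · by_cases h : x ∈ C
    · exact ((hf x h).congr hfC (hfC h))
    · exact continuousWithinAt_of_notMem_closure (by rwa [hC.closure_eq])
  · by_cases h : x ∈ Q
    · exact ((hg x h).congr hgQ (hgQ h))
    · exact continuousWithinAt_of_notMem_closure (by rwa [hQ.closure_eq])

lemma fiber_nonempty (hp : IsCoveringMap p) {x : XX} {e : EE} (he : p e ∈ (hp x).2.choose) :
    Nonempty (p ⁻¹' {x}) := by
  obtain ⟨Φ, _⟩ := (hp x).2.choose_spec.2.2.2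
  exact ⟨(Φ ⟨e, he⟩).2⟩

lemma fiber_nonempty_iff (hp : IsCoveringMap p) {x y : XX} (hy : y ∈ (hp x).2.choose) :
    Nonempty (p ⁻¹' {y}) ↔ Nonempty (p ⁻¹' {x}) := by
  constructor
  · rintro ⟨e, he⟩
    exact fiber_nonempty hp (e := e) (by rw [show p e = y from he]; exact hy)
  · rintro ⟨i⟩
    obtain ⟨Φ, hΦ⟩ := (hp x).2.choose_spec.2.2.2
    refine ⟨⟨(Φ.symm (⟨y, hy⟩, i)).1, ?_⟩⟩
    show p _ = y
    rw [← hΦ, Φ.apply_symm_apply]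

/-- Extend a partial lift of `H` across a closed set `Q` mapping into an evenly covered
base set, provided the overlap is connected and nonempty. -/
lemma extend_lift (hp : IsCoveringMap p) {A : Type*} [TopologicalSpace A] {H : A → XX}
    (hH : Continuous H) {C Q : Set A} (hC : IsClosed C) (hQ : IsClosed Q)
    (hconn : IsPreconnected (C ∩ Q)) (hne : (C ∩ Q).Nonempty)
    {x : XX} (hQT : ∀ q ∈ Q, H q ∈ (hp x).2.choose)
    {L : A → EE} (hLc : ContinuousOn L C) (hLp : ∀ q ∈ C, p (L q) = H q) :
    ∃ L' : A → EE, ContinuousOn L' (C ∪ Q) ∧ (∀ q ∈ C ∪ Q, p (L' q) = H q) ∧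
      Set.EqOn L' L C := by
  obtain ⟨q₀, hq₀C, hq₀Q⟩ := hne
  have hpe₀ : p (L q₀) = H q₀ := hLp _ hq₀C
  haveI : Nonempty (p ⁻¹' {x}) := fiber_nonempty hp (e := L q₀) (by rw [hpe₀]; exact hQT _ hq₀Q)
  set T := (hp x).toTrivialization with hT
  have he₀src : L q₀ ∈ T.source := T.mem_source.2 (by rw [hpe₀]; exact hQT _ hq₀Q)
  set i : ↥(p ⁻¹' {x}) := (T (L q₀)).2 with hi
  set S : A → EE := fun q => T.toOpenPartialHomeomorph.symm (H q, i) with hS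
  have hScont : ContinuousOn S Q := by
    apply T.toOpenPartialHomeomorph.continuousOn_symm.comp
      ((hH.prodMk continuous_const).continuousOn)
    intro q hq
    exact T.mem_target.2 (hQT q hq)
  have hSp : ∀ q ∈ Q, p (S q) = H q := by
    intro q hq
    exact T.proj_symm_apply (T.mem_target.2 (hQT q hq))
  have hS₀ : L q₀ = S q₀ := by
    have h1 : (H q₀, i) = T (L q₀) := by
      rw [hi]
      exact Prod.ext (by rw [← hpe₀]; exact (T.coe_fst he₀src).symm) rfl
    rw [hS]; simp only
    rw [h1]
    exact (T.toOpenPartialHomeomorph.left_inv he₀src).symm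
  have hagree : Set.EqOn L S (C ∩ Q) :=
    hp.eqOn_of_comp_eqOn hconn (hLc.mono Set.inter_subset_left)
      (hScont.mono Set.inter_subset_right)
      (fun q hq => (hLp q hq.1).trans (hSp q hq.2).symm) ⟨hq₀C, hq₀Q⟩ hS₀
  refine ⟨C.piecewise L S, pasting_lemma hC hQ hLc hScont hagree, ?_, ?_⟩
  · intro q hq
    by_cases h : q ∈ C
    · rw [Set.piecewise_eq_of_mem _ _ _ h]; exact hLp q h
    · rw [Set.piecewise_eq_of_notMem _ _ _ h]
      exact hSp q (hq.resolve_left h)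
  · exact fun q hq => Set.piecewise_eq_of_mem _ _ _ hq

/-- Lifting of a continuous map on the unit square, given a lift along the bottom edge. -/
lemma square_lift (hp : IsCoveringMap p) {H : ℝ × ℝ → XX} (hH : Continuous H)
    {f₀ : ℝ → EE} (hf₀ : Continuous f₀) (hf₀p : ∀ s, p (f₀ s) = H (s, 0)) :
    ∃ L : ℝ × ℝ → EE, ContinuousOn L (Set.Icc 0 1 ×ˢ Set.Icc 0 1) ∧
      (∀ q ∈ (Set.Icc (0:ℝ) 1 ×ˢ Set.Icc (0:ℝ) 1 : Set (ℝ × ℝ)), p (L q) = H q) ∧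
      ∀ s ∈ Set.Icc (0:ℝ) 1, L (s, 0) = f₀ s := by
  obtain ⟨δ, hδ, hball⟩ := lebesgue_number_lemma_of_metric
      (s := Set.Icc (0:ℝ) 1 ×ˢ Set.Icc (0:ℝ) 1)
      (c := fun x : XX => H ⁻¹' (hp x).2.choose)
      (isCompact_Icc.prod isCompact_Icc)
      (fun x => (hp x).2.choose_spec.2.1.preimage hH)
      (fun q _ => Set.mem_iUnion.2 ⟨H q, (hp (H q)).2.choose_spec.1⟩)
  obtain ⟨n, hn⟩ := exists_nat_one_div_lt hδ
  set N : ℕ := n + 1 with hNdef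
  have hN0 : (0:ℝ) < (N:ℝ) := by positivity
  have hNδ : 1 / (N:ℝ) < δ := by
    rw [hNdef]; push_cast; exact hn
  -- each grid square is mapped into an evenly covered base set
  have hsq : ∀ j k : ℕ, j < N → k < N → ∃ x : XX,
      ∀ q ∈ (Set.Icc ((j:ℝ)/N) (((j:ℝ)+1)/N) ×ˢ Set.Icc ((k:ℝ)/N) (((k:ℝ)+1)/N) :
        Set (ℝ × ℝ)), H q ∈ (hp x).2.choose := by
    intro j k hj hk
    have hj1 : ((j:ℝ)+1) ≤ (N:ℝ) := by exact_mod_cast Nat.succ_le_of_lt hj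
    have hk1 : ((k:ℝ)+1) ≤ (N:ℝ) := by exact_mod_cast Nat.succ_le_of_lt hk
    have hcorner : (((j:ℝ)/N, (k:ℝ)/N) : ℝ × ℝ) ∈ Set.Icc (0:ℝ) 1 ×ˢ Set.Icc (0:ℝ) 1 := by
      constructor <;> constructor
      · positivity
      · rw [div_le_one hN0]; linarith
      · positivity
      · rw [div_le_one hN0]; linarith
    obtain ⟨x, hx⟩ := hball _ hcorner
    refine ⟨x, fun q hq => hx ?_⟩
    have hdiv : ∀ m : ℝ, (m+1)/(N:ℝ) = m/N + 1/N := fun m => by ring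
    have h1 : dist q.1 ((j:ℝ)/N) ≤ 1/N := by
      rw [Real.dist_eq, abs_le]
      have := hq.1.1; have := hq.1.2; rw [hdiv] at *
      constructor <;> [linarith; linarith]
    have h2 : dist q.2 ((k:ℝ)/N) ≤ 1/N := by
      rw [Real.dist_eq, abs_le]
      have := hq.2.1; have := hq.2.2; rw [hdiv] at *
      constructor <;> [linarith; linarith]
    rw [Metric.mem_ball, Prod.dist_eq]
    exact lt_of_le_of_lt (max_le h1 h2) hNδ
  -- the strip extension
  have strip : ∀ k : ℕ, k < N → ∀ L : ℝ × ℝ → EE,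
      ContinuousOn L (Set.Icc 0 1 ×ˢ Set.Icc 0 ((k:ℝ)/N)) →
      (∀ q ∈ (Set.Icc (0:ℝ) 1 ×ˢ Set.Icc 0 ((k:ℝ)/N) : Set (ℝ × ℝ)), p (L q) = H q) →
      ∃ L' : ℝ × ℝ → EE, ContinuousOn L' (Set.Icc 0 1 ×ˢ Set.Icc 0 (((k:ℝ)+1)/N)) ∧
        (∀ q ∈ (Set.Icc (0:ℝ) 1 ×ˢ Set.Icc 0 (((k:ℝ)+1)/N) : Set (ℝ × ℝ)), p (L' q) = H q) ∧
        Set.EqOn L' L (Set.Icc 0 1 ×ˢ Set.Icc 0 ((k:ℝ)/N)) := by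
    intro k hk L hLc hLp
    have hk0 : (0:ℝ) ≤ (k:ℝ)/N := by positivity
    have hkk : (k:ℝ)/N ≤ ((k:ℝ)+1)/N := by gcongr <;> linarith
    have hkN : ((k:ℝ)+1)/N ≤ 1 := by
      rw [div_le_one hN0]; exact_mod_cast Nat.succ_le_of_lt hk
    have hkN' : (k:ℝ)/N ≤ 1 := le_trans hkk hkN
    set C : Set (ℝ × ℝ) := Set.Icc 0 1 ×ˢ Set.Icc 0 ((k:ℝ)/N) with hCdef
    have hCclosed : IsClosed C := (isClosed_Icc.prod isClosed_Icc)
    have inner : ∀ j : ℕ, j ≤ N → ∃ L' : ℝ × ℝ → EE,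
        ContinuousOn L' (C ∪ Set.Icc 0 ((j:ℝ)/N) ×ˢ Set.Icc ((k:ℝ)/N) (((k:ℝ)+1)/N)) ∧
        (∀ q ∈ C ∪ Set.Icc 0 ((j:ℝ)/N) ×ˢ Set.Icc ((k:ℝ)/N) (((k:ℝ)+1)/N),
          p (L' q) = H q) ∧ Set.EqOn L' L C := by
      intro j
      induction j with
      | zero =>
        intro _
        simp only [Nat.cast_zero, zero_div]
        obtain ⟨x, hx⟩ := hsq 0 k (Nat.succ_pos n) hk
        have hQT : ∀ q ∈ (Set.Icc (0:ℝ) 0 ×ˢ Set.Icc ((k:ℝ)/N) (((k:ℝ)+1)/N) :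
            Set (ℝ × ℝ)), H q ∈ (hp x).2.choose := by
          intro q hq
          apply hx
          refine ⟨⟨?_, ?_⟩, hq.2⟩
          · simpa using hq.1.1
          · simp only [Nat.cast_zero, zero_div]
            have := hq.1.2
            have h1N : (0:ℝ) ≤ ((0:ℝ)+1)/N := by positivity
            linarith
        have hconn' : IsPreconnected (C ∩ Set.Icc (0:ℝ) 0 ×ˢ
            Set.Icc ((k:ℝ)/N) (((k:ℝ)+1)/N)) := by
          rw [hCdef, Set.prod_inter_prod]
          exact (((convex_Icc _ _).inter (convex_Icc _ _)).prod
            ((convex_Icc _ _).inter (convex_Icc _ _))).isPreconnected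
        have hne' : (C ∩ Set.Icc (0:ℝ) 0 ×ˢ Set.Icc ((k:ℝ)/N) (((k:ℝ)+1)/N)).Nonempty := by
          refine ⟨((0:ℝ), (k:ℝ)/N), ⟨⟨le_refl _, zero_le_one⟩, hk0, le_refl _⟩,
            ⟨le_refl _, le_refl _⟩, le_refl _, hkk⟩
        obtain ⟨L', h1, h2, h3⟩ := extend_lift hp hH hCclosed
          (isClosed_Icc.prod isClosed_Icc) hconn' hne' hQT hLc hLp
        exact ⟨L', h1, h2, h3⟩
      | succ j ih =>
        intro hjN
        have hj' : j < N := Nat.lt_of_succ_le hjN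
        obtain ⟨L1, hL1c, hL1p, hL1e⟩ := ih (le_of_lt hj')
        have hj0 : (0:ℝ) ≤ (j:ℝ)/N := by positivity
        have hjj : (j:ℝ)/N ≤ ((j:ℝ)+1)/N := by gcongr <;> linarith
        have hjN1 : ((j:ℝ)+1)/N ≤ 1 := by
          rw [div_le_one hN0]; exact_mod_cast hjN
        have hjN' : (j:ℝ)/N ≤ 1 := le_trans hjj hjN1
        obtain ⟨x, hx⟩ := hsq j k hj' hk
        set Q : Set (ℝ × ℝ) := Set.Icc ((j:ℝ)/N) (((j:ℝ)+1)/N) ×ˢ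
          Set.Icc ((k:ℝ)/N) (((k:ℝ)+1)/N) with hQdef
        set D : Set (ℝ × ℝ) := C ∪ Set.Icc 0 ((j:ℝ)/N) ×ˢ
          Set.Icc ((k:ℝ)/N) (((k:ℝ)+1)/N) with hDdef
        have hDclosed : IsClosed D :=
          hCclosed.union (isClosed_Icc.prod isClosed_Icc)
        have hmem1 : (((j:ℝ)/N, (k:ℝ)/N) : ℝ × ℝ) ∈ C ∩ Q :=
          ⟨⟨⟨hj0, hjN'⟩, hk0, le_refl _⟩, ⟨le_refl _, hjj⟩, le_refl _, hkk⟩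
        have hmem2 : (((j:ℝ)/N, (k:ℝ)/N) : ℝ × ℝ) ∈
            (Set.Icc 0 ((j:ℝ)/N) ×ˢ Set.Icc ((k:ℝ)/N) (((k:ℝ)+1)/N)) ∩ Q :=
          ⟨⟨⟨hj0, le_refl _⟩, le_refl _, hkk⟩, ⟨le_refl _, hjj⟩, le_refl _, hkk⟩
        have hconn' : IsPreconnected (D ∩ Q) := by
          rw [hDdef, Set.union_inter_distrib_right]
          apply IsPreconnected.union (((j:ℝ)/N, (k:ℝ)/N)) hmem1 hmem2
          · rw [hCdef, Set.prod_inter_prod]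
            exact (((convex_Icc _ _).inter (convex_Icc _ _)).prod
              ((convex_Icc _ _).inter (convex_Icc _ _))).isPreconnected
          · rw [Set.prod_inter_prod]
            exact (((convex_Icc _ _).inter (convex_Icc _ _)).prod
              ((convex_Icc _ _).inter (convex_Icc _ _))).isPreconnected
        have hne' : (D ∩ Q).Nonempty :=
          ⟨((j:ℝ)/N, (k:ℝ)/N), Or.inl hmem1.1, hmem1.2⟩
        obtain ⟨L', h1, h2, h3⟩ := extend_lift hp hH hDclosed
          (isClosed_Icc.prod isClosed_Icc) hconn' hne' hx hL1c hL1p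
        have hDQ : D ∪ Q = C ∪ Set.Icc 0 (((j:ℝ)+1)/N) ×ˢ
            Set.Icc ((k:ℝ)/N) (((k:ℝ)+1)/N) := by
          rw [hDdef, Set.union_assoc, ← Set.union_prod,
            Set.Icc_union_Icc_eq_Icc hj0 hjj]
        rw [hDQ] at h1 h2
        have hcast : (((j+1:ℕ)):ℝ) = (j:ℝ)+1 := by push_cast; ring
        rw [hcast]
        exact ⟨L', h1, h2, fun q hq => (h3 (Or.inl hq)).trans (hL1e hq)⟩
    obtain ⟨L', h1, h2, h3⟩ := inner N (le_refl N)
    have hNN : ((N:ℕ):ℝ)/(N:ℝ) = 1 := div_self hN0.ne'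
    rw [hNN] at h1 h2
    have hfinal : C ∪ Set.Icc (0:ℝ) 1 ×ˢ Set.Icc ((k:ℝ)/N) (((k:ℝ)+1)/N)
        = Set.Icc 0 1 ×ˢ Set.Icc 0 (((k:ℝ)+1)/N) := by
      rw [hCdef, ← Set.prod_union, Set.Icc_union_Icc_eq_Icc hk0 hkk]
    rw [hfinal] at h1 h2
    exact ⟨L', h1, h2, h3⟩
  -- outer induction over strips
  have main : ∀ k : ℕ, k ≤ N → ∃ L : ℝ × ℝ → EE,
      ContinuousOn L (Set.Icc 0 1 ×ˢ Set.Icc 0 ((k:ℝ)/N)) ∧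
      (∀ q ∈ (Set.Icc (0:ℝ) 1 ×ˢ Set.Icc 0 ((k:ℝ)/N) : Set (ℝ × ℝ)), p (L q) = H q) ∧
      ∀ s ∈ Set.Icc (0:ℝ) 1, L (s, 0) = f₀ s := by
    intro k
    induction k with
    | zero =>
      intro _
      refine ⟨fun q => f₀ q.1, (hf₀.comp continuous_fst).continuousOn, ?_, fun s _ => rfl⟩
      intro q hq
      have hq2 : q.2 = 0 := by
        have := hq.2
        simp only [Nat.cast_zero, zero_div] at this
        exact le_antisymm this.2 this.1
      have : q = (q.1, (0:ℝ)) := by rw [← hq2]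
      rw [hf₀p q.1, ← this]
    | succ k ih =>
      intro hkN
      have hk' : k < N := Nat.lt_of_succ_le hkN
      obtain ⟨L, h1, h2, h3⟩ := ih (le_of_lt hk')
      obtain ⟨L', h1', h2', h3'⟩ := strip k hk' L h1 h2
      have hcast : (((k+1:ℕ)):ℝ)/N = ((k:ℝ)+1)/N := by push_cast; ring
      rw [hcast]
      refine ⟨L', h1', h2', fun s hs => ?_⟩
      rw [h3' ⟨hs, le_refl _, by positivity⟩]
      exact h3 s hs
  obtain ⟨L, h1, h2, h3⟩ := main N (le_refl N)
  rw [div_self hN0.ne'] at h1 h2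
  exact ⟨L, h1, h2, h3⟩

end Lifting

section LiftingI

open unitInterval

variable {EE XX : Type*} [TopologicalSpace EE] [TopologicalSpace XX] {p : EE → XX}

/-- The retraction of `ℝ` onto the unit interval. -/
noncomputable def rI : ℝ → I := fun t => Set.projIcc 0 1 zero_le_one t

lemma rI_coe (t : I) : rI (t : ℝ) = t := by
  rw [rI, Set.projIcc_of_mem zero_le_one t.2]

lemma rI_zero : rI 0 = 0 := by
  rw [rI, Set.projIcc_left]; rfl

lemma continuous_rI : Continuous rI := by unfold rI; exact continuous_projIcc

/-- Lifting of continuous maps on the unit square along a covering map, given a continuous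
lift along the bottom edge. -/
lemma square_lift_unit (hp : IsCoveringMap p) {G : I × I → XX} (hG : Continuous G)
    {f₀ : I → EE} (hf₀ : Continuous f₀) (hf₀p : ∀ s, p (f₀ s) = G (s, 0)) :
    ∃ L : I × I → EE, Continuous L ∧ (∀ q, p (L q) = G q) ∧ ∀ s, L (s, 0) = f₀ s := by
  set H : ℝ × ℝ → XX := fun q => G (rI q.1, rI q.2) with hH
  have hHc : Continuous H := hG.comp
    ((continuous_rI.comp continuous_fst).prodMk (continuous_rI.comp continuous_snd))
  set g : ℝ → EE := fun s => f₀ (rI s) with hg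
  have hgc : Continuous g := hf₀.comp continuous_rI
  have hgp : ∀ s, p (g s) = H (s, 0) := by
    intro s
    rw [hg, hH]
    simp only
    rw [hf₀p, rI_zero]
  obtain ⟨L, h1, h2, h3⟩ := square_lift hp hHc hgc hgp
  refine ⟨fun q => L ((q.1 : ℝ), (q.2 : ℝ)), ?_, ?_, ?_⟩
  · apply h1.comp_continuous
      ((continuous_subtype_val.comp continuous_fst).prodMk
        (continuous_subtype_val.comp continuous_snd))
    intro q
    exact ⟨q.1.2, q.2.2⟩
  · intro q
    rw [h2 _ ⟨q.1.2, q.2.2⟩, hH]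
    simp only [rI_coe]
  · intro s
    have h := h3 (s : ℝ) s.2
    rw [hg] at h
    simp only [rI_coe] at h
    exact h

/-- Uniqueness of lifts along the unit interval. -/
lemma lift_unique_I (hp : IsCoveringMap p) {g₁ g₂ : I → EE} (h₁ : Continuous g₁)
    (h₂ : Continuous g₂) (he : ∀ t, p (g₁ t) = p (g₂ t)) (t₀ : I) (h0 : g₁ t₀ = g₂ t₀) :
    ∀ t, g₁ t = g₂ t := by
  haveI : PreconnectedSpace I := Subtype.preconnectedSpace isPreconnected_Icc
  exact fun t => congrFun (hp.eq_of_comp_eq h₁ h₂ (funext he) t₀ h0) t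

end LiftingI

section HomotopyHelpers

open unitInterval

/-- Push a path homotopy forward along a continuous map, with explicitly specified images
(this absorbs all proof-irrelevant mismatches in endpoints). -/
lemma homotopic_comp {α β : Type*} [TopologicalSpace α] [TopologicalSpace β]
    {a₁ a₂ : α} {γ₁ γ₂ : Path a₁ a₂} (h : γ₁.Homotopic γ₂)
    {b₁ b₂ : β} (δ₁ δ₂ : Path b₁ b₂) {f : α → β} (hf : Continuous f)
    (h₁ : ∀ t, f (γ₁ t) = δ₁ t) (h₂ : ∀ t, f (γ₂ t) = δ₂ t) :
    δ₁.Homotopic δ₂ := by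
  obtain ⟨F⟩ := h
  refine ⟨{ toFun := fun q => f (F q),
            continuous_toFun := hf.comp F.continuous,
            map_zero_left := ?_, map_one_left := ?_, prop' := ?_ }⟩
  · intro t
    rw [F.apply_zero]
    exact h₁ t
  · intro t
    rw [F.apply_one]
    exact h₂ t
  · intro s t ht
    simp only [ContinuousMap.coe_mk]
    rw [F.eq_fst s ht]
    exact h₁ t

/-- Build a null-homotopy of a loop from a square with appropriate boundary behaviour. -/
lemma homotopic_refl_of_square {β : Type*} [TopologicalSpace β] {b : β} (γ : Path b b)
    {L : I × I → β} (hL : Continuous L)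
    (h0 : ∀ t, L (0, t) = γ t) (h1 : ∀ t, L (1, t) = b)
    (hs0 : ∀ s, L (s, 0) = b) (hs1 : ∀ s, L (s, 1) = b) :
    γ.Homotopic (Path.refl b) := by
  refine ⟨{ toFun := L, continuous_toFun := hL,
            map_zero_left := fun t => h0 t, map_one_left := fun t => h1 t,
            prop' := ?_ }⟩
  intro s t ht
  rcases ht with h | h
  · subst h
    simp only [ContinuousMap.coe_mk]
    rw [hs0 s]
    exact γ.source.symm
  · rw [Set.mem_singleton_iff] at h
    subst h
    simp only [ContinuousMap.coe_mk]
    rw [hs1 s]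
    exact γ.target.symm

end HomotopyHelpers

end CoveringLifting

open unitInterval in
/-- Let `X` be a 2-dimensional simplicial complex and `p : X̃ → X` its
universal cover (`X̃` a simplicial complex whose space is simply connected, `p` a covering map
under which the preimage of any subcomplex of `X` is a subcomplex of `X̃`). If `X̃` has strong
π₁-injectivity, then `X` has strong π₁-injectivity. -/
theorem hasStrongPiOneInjectivity_of_universal_cover
    (X : SimplicialComplex ℝ E)
    (hdim : IsTwoDimensional X) (hconn : ConnectedSpace X.space)
    (X' : SimplicialComplex ℝ F) (p : X'.space → X.space)
    (hcov : IsCoveringMap p) (huniv : SimplyConnectedSpace X'.space)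
    (hsimplicial : ∀ Z : SimplicialComplex ℝ E, IsSubcomplexOf Z X →
      ∃ W : SimplicialComplex ℝ F, IsSubcomplexOf W X' ∧
        Subtype.val '' (p ⁻¹' {x : X.space | (x : E) ∈ Z.space}) = W.space)
    (hstrong : HasStrongPiOneInjectivity X') :
    HasStrongPiOneInjectivity X := by
  intro Y hYX hYinj Z hZX
  obtain ⟨WY, hWYsub, hWYspace⟩ := hsimplicial Y hYX
  obtain ⟨WZ, hWZsub, hWZspace⟩ := hsimplicial Z hZX
  haveI := huniv
  have hYXs : Y.space ⊆ X.space := space_subset_of_subcomplex hYX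
  have hZXs : Z.space ⊆ X.space := space_subset_of_subcomplex hZX
  have hWYX' : WY.space ⊆ X'.space := space_subset_of_subcomplex hWYsub
  have hWZX' : WZ.space ⊆ X'.space := space_subset_of_subcomplex hWZsub
  have hY' : ∀ x' : ↥X'.space, ((x' : F) ∈ WY.space ↔ ((p x' : ↥X.space) : E) ∈ Y.space) := by
    intro x'
    constructor
    · intro h
      rw [← hWYspace] at h
      obtain ⟨y', hy', hval⟩ := h
      rwa [show y' = x' from Subtype.coe_injective hval] at hy'
    · intro h
      rw [← hWYspace]
      exact ⟨x', h, rfl⟩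
  have hZ' : ∀ x' : ↥X'.space, ((x' : F) ∈ WZ.space ↔ ((p x' : ↥X.space) : E) ∈ Z.space) := by
    intro x'
    constructor
    · intro h
      rw [← hWZspace] at h
      obtain ⟨y', hy', hval⟩ := h
      rwa [show y' = x' from Subtype.coe_injective hval] at hy'
    · intro h
      rw [← hWZspace]
      exact ⟨x', h, rfl⟩
  -- surjectivity of the covering map (any trivialization provides a point in each fiber)
  have hne' : Nonempty ↥X'.space := (inferInstance : PathConnectedSpace ↥X'.space).nonempty
  have hsurj : Function.Surjective p := by
    haveI := hconn
    have hS : IsClopen {x : ↥X.space | Nonempty (p ⁻¹' {x})} := by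
      constructor
      · rw [← isOpen_compl_iff, isOpen_iff_forall_mem_open]
        intro x hx
        exact ⟨(hcov x).2.choose, fun y hy hy' => hx ((fiber_nonempty_iff hcov hy).1 hy'),
          (hcov x).2.choose_spec.2.1, (hcov x).2.choose_spec.1⟩
      · rw [isOpen_iff_forall_mem_open]
        intro x hx
        exact ⟨(hcov x).2.choose, fun y hy => (fiber_nonempty_iff hcov hy).2 hx,
          (hcov x).2.choose_spec.2.1, (hcov x).2.choose_spec.1⟩
    intro x
    obtain ⟨e₀⟩ := hne'
    have hmem : p e₀ ∈ {x : ↥X.space | Nonempty (p ⁻¹' {x})} := ⟨⟨e₀, rfl⟩⟩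
    have h := hS.eq_univ ⟨_, hmem⟩
    have hx : x ∈ {x : ↥X.space | Nonempty (p ⁻¹' {x})} := h ▸ Set.mem_univ x
    obtain ⟨⟨e, he⟩⟩ := hx
    exact ⟨e, he⟩
  -- Step B : the preimage subcomplex W_Y is π₁-injective in X'
  have hWYinj : PiOneInjIncl (space_subset_of_subcomplex hWYsub) := by
    intro e δ _
    set qY : ↥WY.space → ↥Y.space := fun w =>
      ⟨((p (Set.inclusion hWYX' w) : ↥X.space) : E), (hY' _).1 w.2⟩ with hqY
    have hqYc : Continuous qY :=
      Continuous.subtype_mk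
        (continuous_subtype_val.comp (hcov.continuous.comp (continuous_inclusion hWYX'))) _
    have h1 : (δ.map (continuous_inclusion hWYX')).Homotopic
        (Path.refl (Set.inclusion hWYX' e)) := SimplyConnectedSpace.paths_homotopic _ _
    have h2 : ((δ.map hqYc).map (continuous_inclusion hYXs)).Homotopic
        (Path.refl (Set.inclusion hYXs (qY e))) := by
      refine homotopic_comp h1 _ _ hcov.continuous ?_ ?_
      · intro t; exact Subtype.ext rfl
      · intro t; exact Subtype.ext rfl
    obtain ⟨Fh⟩ := hYinj (qY e) (δ.map hqYc) h2
    set G : I × I → ↥X.space := fun q => Set.inclusion hYXs (Fh q) with hG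
    have hGc : Continuous G := (continuous_inclusion hYXs).comp Fh.continuous
    obtain ⟨L, hLc, hLp, hL0⟩ := square_lift_unit hcov hGc
      (f₀ := fun _ => Set.inclusion hWYX' e) continuous_const (fun s => by
        simp only [hG]
        rw [Fh.source])
    have hleft : ∀ t, L (0, t) = Set.inclusion hWYX' (δ t) := by
      refine lift_unique_I hcov (hLc.comp (Continuous.prodMk_right 0))
        ((continuous_inclusion hWYX').comp δ.continuous) ?_ 0 ?_
      · intro t
        show p (L (0, t)) = p (Set.inclusion hWYX' (δ t))
        rw [hLp (0, t)]
        simp only [hG]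
        rw [Fh.apply_zero]
        exact Subtype.ext rfl
      · show L (0, 0) = Set.inclusion hWYX' (δ 0)
        rw [hL0 0, δ.source]
    have htop : ∀ t, L (1, t) = Set.inclusion hWYX' e := by
      refine lift_unique_I hcov (hLc.comp (Continuous.prodMk_right 1)) continuous_const ?_ 0 ?_
      · intro t
        show p (L (1, t)) = p (Set.inclusion hWYX' e)
        rw [hLp (1, t)]
        simp only [hG]
        rw [Fh.apply_one]
        exact Subtype.ext rfl
      · show L (1, 0) = Set.inclusion hWYX' e
        exact hL0 1
    have hedge1 : ∀ s, L (s, 1) = Set.inclusion hWYX' e := by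
      refine lift_unique_I hcov (hLc.comp (continuous_id.prodMk continuous_const))
        continuous_const ?_ 0 ?_
      · intro s
        show p (L (s, 1)) = p (Set.inclusion hWYX' e)
        rw [hLp (s, 1)]
        simp only [hG]
        rw [Fh.target]
      · show L (0, 1) = Set.inclusion hWYX' e
        rw [hleft 1, δ.target]
    have hmem : ∀ q : I × I, (L q : F) ∈ WY.space := by
      intro q
      apply (hY' (L q)).2
      rw [hLp q]
      simp only [hG]
      exact (Fh q).2
    refine homotopic_refl_of_square δ (L := fun q => (⟨(L q : F), hmem q⟩ : ↥WY.space))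
      (Continuous.subtype_mk (continuous_subtype_val.comp hLc) _) ?_ ?_ ?_ ?_
    · intro t
      refine Subtype.ext ?_
      show (L (0, t) : F) = ((δ t : ↥WY.space) : F)
      rw [hleft t]
    · intro t
      refine Subtype.ext ?_
      show (L (1, t) : F) = (e : F)
      rw [htop t]
    · intro s
      refine Subtype.ext ?_
      show (L (s, 0) : F) = (e : F)
      rw [hL0 s]
    · intro s
      refine Subtype.ext ?_
      show (L (s, 1) : F) = (e : F)
      rw [hedge1 s]
  -- Step C : strong π₁-injectivity of W_Y in X'
  have hkey := hstrong WY hWYsub hWYinj WZ hWZsub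
  -- Step D : lift the given loop and null-homotopy, apply hkey, and project back down
  intro a γ hγ
  set aX : ↥X.space := ⟨(a : E), hYXs a.2.1⟩ with haX
  obtain ⟨a', ha'⟩ := hsurj aX
  obtain ⟨Fh⟩ := hγ
  set G : I × I → ↥X.space := fun q => Set.inclusion hZXs (Fh q) with hG
  have hGc : Continuous G := (continuous_inclusion hZXs).comp Fh.continuous
  obtain ⟨L, hLc, hLp, hL0⟩ := square_lift_unit hcov hGc (f₀ := fun _ => a') continuous_const
    (fun s => by
      simp only [hG]
      rw [Fh.source, ha'])
  have htop : ∀ t, L (1, t) = a' := by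
    refine lift_unique_I hcov (hLc.comp (Continuous.prodMk_right 1)) continuous_const ?_ 0 ?_
    · intro t
      show p (L (1, t)) = p a'
      rw [hLp (1, t), ha']
      simp only [hG]
      rw [Fh.apply_one]
      exact Subtype.ext rfl
    · show L (1, 0) = a'
      exact hL0 1
  have hedge1 : ∀ s, L (s, 1) = a' := by
    refine lift_unique_I hcov (hLc.comp (continuous_id.prodMk continuous_const))
      continuous_const ?_ 1 ?_
    · intro s
      show p (L (s, 1)) = p a'
      rw [hLp (s, 1), ha']
      simp only [hG]
      rw [Fh.target]
    · show L (1, 1) = a'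
      exact htop 1
  have hmemZ : ∀ q : I × I, (L q : F) ∈ WZ.space := by
    intro q
    apply (hZ' (L q)).2
    rw [hLp q]
    simp only [hG]
    exact (Fh q).2
  have hmemY : ∀ t : I, (L (0, t) : F) ∈ WY.space := by
    intro t
    apply (hY' (L (0, t))).2
    rw [hLp (0, t)]
    simp only [hG]
    rw [Fh.apply_zero]
    exact (γ t).2.1
  have ha'Y : (a' : F) ∈ WY.space := (hY' a').2 (by rw [ha']; exact a.2.1)
  have ha'Z : (a' : F) ∈ WZ.space := (hZ' a').2 (by rw [ha']; exact a.2.2)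
  set a'' : ↥(WY.space ∩ WZ.space) := ⟨(a' : F), ha'Y, ha'Z⟩ with ha''
  set δ : Path a'' a'' :=
    { toFun := fun t => ⟨(L (0, t) : F), hmemY t, hmemZ (0, t)⟩
      continuous_toFun := Continuous.subtype_mk
        (continuous_subtype_val.comp (hLc.comp (Continuous.prodMk_right 0))) _
      source' := Subtype.ext (show (L (0, 0) : F) = (a' : F) by rw [hL0 0])
      target' := Subtype.ext (show (L (0, 1) : F) = (a' : F) by rw [hedge1 0]) } with hδ
  have hδnull : (δ.map (continuous_inclusion Set.inter_subset_right)).Homotopic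
      (Path.refl (Set.inclusion Set.inter_subset_right a'')) := by
    refine homotopic_refl_of_square _ (L := fun q => (⟨(L q : F), hmemZ q⟩ : ↥WZ.space))
      (Continuous.subtype_mk (continuous_subtype_val.comp hLc) _) ?_ ?_ ?_ ?_
    · intro t; exact Subtype.ext rfl
    · intro t
      refine Subtype.ext ?_
      show (L (1, t) : F) = (a' : F)
      rw [htop t]
    · intro s
      refine Subtype.ext ?_
      show (L (s, 0) : F) = (a' : F)
      rw [hL0 s]
    · intro s
      refine Subtype.ext ?_
      show (L (s, 1) : F) = (a' : F)
      rw [hedge1 s]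
  have hfinal := hkey a'' δ hδnull
  set π : ↥(WY.space ∩ WZ.space) → ↥(Y.space ∩ Z.space) := fun w =>
    ⟨((p ⟨(w : F), hWYX' w.2.1⟩ : ↥X.space) : E),
      (hY' _).1 w.2.1, (hZ' _).1 w.2.2⟩ with hπ
  have hπc : Continuous π :=
    Continuous.subtype_mk (continuous_subtype_val.comp (hcov.continuous.comp
      (Continuous.subtype_mk continuous_subtype_val _))) _
  refine homotopic_comp hfinal γ (Path.refl a) hπc ?_ ?_
  · intro t
    apply Subtype.ext
    show ((p ⟨((δ t : ↥(WY.space ∩ WZ.space)) : F), hWYX' (δ t).2.1⟩ : ↥X.space) : E) = (γ t : E)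
    have e1 : (⟨((δ t : ↥(WY.space ∩ WZ.space)) : F), hWYX' (δ t).2.1⟩ : ↥X'.space) = L (0, t) :=
      Subtype.ext rfl
    rw [e1, hLp (0, t)]
    simp only [hG]
    rw [Fh.apply_zero]
    rfl
  · intro t
    apply Subtype.ext
    show ((p ⟨((a'' : ↥(WY.space ∩ WZ.space)) : F), hWYX' a''.2.1⟩ : ↥X.space) : E) = (a : E)
    have e2 : (⟨((a'' : ↥(WY.space ∩ WZ.space)) : F), hWYX' a''.2.1⟩ : ↥X'.space) = a' :=
      Subtype.ext rfl
    rw [e2, ha']
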